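/- A nice t-boundaried embedding of genus ĝ has at most 48t + 24ĝ flags. Equivalently, its number of edges is at most 12t + 6ĝ. -/

import Mathlib

def FPF {F : Type*} (π : Equiv.Perm F) : Prop := π * π = 1 ∧ ∀ x, π x ≠ x

def orbSet {F : Type*} (S : Set (Equiv.Perm F)) (x : F) : Set F :=
  MulAction.orbit (Subgroup.closure S) x

noncomputable def orbCount {F : Type*} (S : Set (Equiv.Perm F)) : ℕ :=
  Nat.card (MulAction.orbitRel.Quotient (Subgroup.closure S) F)

noncomputable def genus {F : Type*} (θ σ' φ' : Equiv.Perm F) : ℤ :=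
  (orbCount {θ, σ'} : ℤ) - orbCount {σ', φ'} - orbCount {θ, φ'} + 2 * orbCount {θ, σ', φ'}

def IsGraphEmb {F : Type*} (θ σ' φ' : Equiv.Perm F) : Prop :=
  FPF θ ∧ FPF σ' ∧ FPF φ' ∧ ∀ x : F, Nat.card (orbSet {θ, σ'} x) = 4

def IsEdgeDeletion {F : Type*} (σ' φ' : Equiv.Perm F) (e : Set F)
    (θ₀ σ₀ φ₀ : Equiv.Perm {f : F // f ∉ e}) (θ : Equiv.Perm F) : Prop :=
  (∀ a : {f : F // f ∉ e}, (θ₀ a : F) = θ a ∧ (σ₀ a : F) = σ' a) ∧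
  (∀ a : {f : F // f ∉ e}, ∃ m : ℕ,
     ((φ' * σ') ^ m) (φ' a) ∉ e ∧ (∀ j < m, ((φ' * σ') ^ j) (φ' a) ∈ e) ∧
     (φ₀ a : F) = ((φ' * σ') ^ m) (φ' a))

/-- `L` is a proper vertex labelling: constant on vertex orbits, and injective
across distinct vertex orbits. -/
def IsLabelling {F : Type*} {t : ℕ} (σ' φ' : Equiv.Perm F) (L : F → Option (Fin t)) : Prop :=
  (∀ f : F, ∀ x ∈ orbSet {σ', φ'} f, L x = L f) ∧
  (∀ f f' : F, ∀ ℓ : Fin t, L f = some ℓ → L f' = some ℓ → f' ∈ orbSet {σ', φ'} f)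

/-- Niceness of a `t`-boundaried embedding: every unlabelled vertex with fewer than
6 flags is isolated, and every edge incident with two faces has, on each incident
face, a labelled flag away from the edge's neighbourhood. -/
def IsNice {F : Type*} {t : ℕ} (θ σ' φ' : Equiv.Perm F) (L : F → Option (Fin t)) : Prop :=
  (∀ f : F, L f = none → Nat.card (orbSet {σ', φ'} f) < 6 →
    orbSet {σ', φ'} f = orbSet {θ, σ', φ'} f) ∧
  (∀ y : F, Nat.card ((fun f => orbSet {θ, φ'} f) '' orbSet {θ, σ'} y) = 2 →
    ∃ z ∈ orbSet {θ, φ'} y, z ∉ ({y, θ y, φ' y, φ' (θ y)} : Set F) ∧ L z ≠ none)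

namespace Stmt12Aux

variable {F : Type*}

lemma invol_apply {π : Equiv.Perm F} (h : π * π = 1) (x : F) : π (π x) = x := by
  have h1 := DFunLike.congr_fun h x
  simpa [Equiv.Perm.mul_apply] using h1

lemma mem_orbSet_self (S : Set (Equiv.Perm F)) (x : F) : x ∈ orbSet S x :=
  MulAction.mem_orbit_self x

lemma orbSet_eq_of_mem {S : Set (Equiv.Perm F)} {x y : F} (h : x ∈ orbSet S y) :
    orbSet S x = orbSet S y :=
  MulAction.orbit_eq_iff.mpr h

lemma apply_mem_orbSet {S : Set (Equiv.Perm F)} {π : Equiv.Perm F} (hπ : π ∈ S) {x y : F}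
    (h : y ∈ orbSet S x) : π y ∈ orbSet S x := by
  rw [← orbSet_eq_of_mem h]
  exact MulAction.mem_orbit y (⟨π, Subgroup.subset_closure hπ⟩ : Subgroup.closure S)

lemma mem_orbSet_symm {S : Set (Equiv.Perm F)} {x y : F} (h : y ∈ orbSet S x) :
    x ∈ orbSet S y := by
  rw [orbSet_eq_of_mem h]
  exact mem_orbSet_self S x

lemma orbSet_subset_of_closed [Finite F] {S : Set (Equiv.Perm F)} {x : F} {T : Set F}
    (hx : x ∈ T) (hT : ∀ π ∈ S, ∀ z ∈ T, π z ∈ T) : orbSet S x ⊆ T := by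
  rintro w hw
  obtain ⟨g, rfl⟩ := hw
  obtain ⟨g, hg⟩ := g
  have key : ∀ z ∈ T, g z ∈ T := by
    induction hg using Subgroup.closure_induction with
    | mem π hπ => exact hT π hπ
    | one => intro z hz; simpa using hz
    | mul a b ha hb iha ihb =>
        intro z hz
        have h1 := iha (b z) (ihb z hz)
        simpa [Equiv.Perm.mul_apply] using h1
    | inv a ha iha =>
        intro z hz
        have himg : a '' T = T := by
          apply Set.eq_of_subset_of_ncard_le
          · rintro _ ⟨w, hw, rfl⟩; exact iha w hw
          · rw [Set.ncard_image_of_injective _ a.injective]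
          · exact Set.toFinite T
        rw [← himg] at hz
        obtain ⟨w, hw, hww⟩ := hz
        have hww' : a⁻¹ z = w := by
          rw [← hww]; simp
        rw [hww']; exact hw
  exact key x hx

lemma orbSet_mono {S S' : Set (Equiv.Perm F)} (h : S ⊆ S') (x : F) :
    orbSet S x ⊆ orbSet S' x := by
  rintro w ⟨g, rfl⟩
  exact ⟨⟨(g : Equiv.Perm F), Subgroup.closure_mono h g.2⟩, rfl⟩

lemma ncard_le_two [Finite F] (a b : F) : ({a, b} : Set F).ncard ≤ 2 := by
  refine le_trans (Set.ncard_insert_le _ _) ?_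
  simp [Set.ncard_singleton]

lemma ncard_le_four [Finite F] (a b c d : F) : ({a, b, c, d} : Set F).ncard ≤ 4 := by
  refine le_trans (Set.ncard_insert_le _ _) ?_
  refine le_trans (Nat.add_le_add_right (Set.ncard_insert_le _ _) 1) ?_
  simpa using Nat.add_le_add_right (Nat.add_le_add_right (ncard_le_two c d) 1) 1

lemma ncard4 [Finite F] {a b c d : F} (hab : a ≠ b) (hac : a ≠ c) (had : a ≠ d)
    (hbc : b ≠ c) (hbd : b ≠ d) (hcd : c ≠ d) : ({a, b, c, d} : Set F).ncard = 4 := by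
  rw [Set.ncard_insert_of_notMem (by simp [hab, hac, had]),
      Set.ncard_insert_of_notMem (by simp [hbc, hbd]), Set.ncard_pair hcd]

/-- Structure of an edge orbit of cardinality 4. -/
lemma edge_struct [Finite F] {θ σ' : Equiv.Perm F} (hθ : FPF θ) (hσ' : FPF σ') {y : F}
    (h4 : Nat.card (orbSet {θ, σ'} y) = 4) :
    orbSet {θ, σ'} y = {y, θ y, σ' y, θ (σ' y)} ∧ σ' (θ y) = θ (σ' y) ∧ θ y ≠ σ' y := by
  have hθi := invol_apply hθ.1
  have hσi := invol_apply hσ'.1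
  have h4' : (orbSet {θ, σ'} y).ncard = 4 := by
    rw [← Nat.card_coe_set_eq]; exact h4
  have hθmem : θ ∈ ({θ, σ'} : Set (Equiv.Perm F)) := by simp
  have hσmem : σ' ∈ ({θ, σ'} : Set (Equiv.Perm F)) := by simp
  have hne : θ y ≠ σ' y := by
    intro heq
    have hsub : orbSet {θ, σ'} y ⊆ {y, θ y} := by
      apply orbSet_subset_of_closed (Set.mem_insert _ _)
      intro π hπ z hz
      have hπ' : π = θ ∨ π = σ' := by simpa using hπ
      have hz' : z = y ∨ z = θ y := by simpa using hz
      rcases hπ' with h | h <;> rcases hz' with h2 | h2 <;> rw [h, h2]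
      · simp
      · simp [hθi y]
      · simp [← heq]
      · have h3 : σ' (θ y) = y := by rw [heq]; exact hσi y
        simp [h3]
    have hle : (orbSet {θ, σ'} y).ncard ≤ 2 :=
      le_trans (Set.ncard_le_ncard hsub (Set.toFinite _)) (ncard_le_two _ _)
    omega
  have d1 : y ≠ θ y := fun h => hθ.2 y h.symm
  have d2 : y ≠ σ' y := fun h => hσ'.2 y h.symm
  have d3 : y ≠ θ (σ' y) := by
    intro h
    have h' := congrArg θ h
    rw [hθi] at h'
    exact hne h'
  have d4 : θ y ≠ θ (σ' y) := fun h => d2 (θ.injective h)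
  have d5 : σ' y ≠ θ (σ' y) := fun h => hθ.2 (σ' y) h.symm
  have hsub4 : ({y, θ y, σ' y, θ (σ' y)} : Set F) ⊆ orbSet {θ, σ'} y := by
    rintro z (rfl | rfl | rfl | rfl)
    · exact mem_orbSet_self _ _
    · exact apply_mem_orbSet hθmem (mem_orbSet_self _ _)
    · exact apply_mem_orbSet hσmem (mem_orbSet_self _ _)
    · exact apply_mem_orbSet hθmem (apply_mem_orbSet hσmem (mem_orbSet_self _ _))
  have hset : orbSet {θ, σ'} y = {y, θ y, σ' y, θ (σ' y)} :=
    (Set.eq_of_subset_of_ncard_le hsub4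
      (by rw [h4', ncard4 d1 d2 d3 hne d4 d5]) (Set.toFinite _)).symm
  have hcomm : σ' (θ y) = θ (σ' y) := by
    have hmem : σ' (θ y) ∈ orbSet {θ, σ'} y :=
      apply_mem_orbSet hσmem (apply_mem_orbSet hθmem (mem_orbSet_self _ _))
    rw [hset] at hmem
    rcases hmem with h | h | h | h
    · exact absurd (by rw [← hσi (θ y), h] : θ y = σ' y) hne
    · exact absurd h (hσ'.2 (θ y))
    · exact absurd (σ'.injective h) (fun hh => d1 hh.symm)
    · exact h
  exact ⟨hset, hcomm, hne⟩



/-- From niceness: every edge side is either "mono" (same face on both sides) or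
its face contains a labelled flag avoiding the edge's neighbourhood. -/
lemma witness_or_mono [Finite F] {t : ℕ} {θ σ' φ' : Equiv.Perm F} {L : F → Option (Fin t)}
    (hθ : FPF θ) (hσ' : FPF σ')
    (h4 : ∀ x : F, Nat.card (orbSet {θ, σ'} x) = 4)
    (hnice : IsNice θ σ' φ' L) (y : F) :
    orbSet {θ, φ'} (σ' y) = orbSet {θ, φ'} y ∨
      ∃ z, z ∈ orbSet {θ, φ'} y ∧ L z ≠ none ∧
        z ∉ ({y, θ y, φ' y, φ' (θ y)} : Set F) := by
  by_cases hc : orbSet {θ, φ'} (σ' y) = orbSet {θ, φ'} y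
  · exact Or.inl hc
  right
  have hcard : Nat.card ((fun f => orbSet {θ, φ'} f) '' orbSet {θ, σ'} y) = 2 := by
    obtain ⟨hedge, -, -⟩ := edge_struct hθ hσ' (h4 y)
    rw [hedge]
    have h1 : orbSet {θ, φ'} (θ y) = orbSet {θ, φ'} y :=
      orbSet_eq_of_mem (apply_mem_orbSet (by simp) (mem_orbSet_self _ _))
    have h2 : orbSet {θ, φ'} (θ (σ' y)) = orbSet {θ, φ'} (σ' y) :=
      orbSet_eq_of_mem (apply_mem_orbSet (by simp) (mem_orbSet_self _ _))
    simp only [Set.image_insert_eq, Set.image_singleton, h1, h2, Set.insert_idem,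
      Set.pair_eq_singleton]
    rw [Nat.card_coe_set_eq]
    exact Set.ncard_pair (Ne.symm hc)
  obtain ⟨z, hz1, hz2, hz3⟩ := hnice.2 y hcard
  exact ⟨z, hz1, hz3, hz2⟩

section FaceLemmas

variable [Finite F] {t : ℕ} {θ σ' φ' : Equiv.Perm F} {L : F → Option (Fin t)}

/-- No face has exactly 2 flags. -/
lemma no_two_face (hθ : FPF θ) (hσ' : FPF σ') (hφ' : FPF φ')
    (h4 : ∀ x : F, Nat.card (orbSet {θ, σ'} x) = 4)
    (hnice : IsNice θ σ' φ' L) (y : F) : (orbSet {θ, φ'} y).ncard ≠ 2 := by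
  intro h2
  have hθi := invol_apply hθ.1
  have hyf : y ∈ orbSet {θ, φ'} y := mem_orbSet_self _ _
  have hθy : θ y ∈ orbSet {θ, φ'} y := apply_mem_orbSet (by simp) hyf
  have hny : y ≠ θ y := fun h => hθ.2 y h.symm
  have hset : orbSet {θ, φ'} y = {y, θ y} :=
    (Set.eq_of_subset_of_ncard_le (by rintro z (rfl | rfl) <;> assumption)
      (by rw [h2, Set.ncard_pair hny]) (Set.toFinite _)).symm
  obtain ⟨-, -, hneθσ⟩ := edge_struct hθ hσ' (h4 y)
  rcases witness_or_mono hθ hσ' h4 hnice y with hmono | ⟨z, hz1, hz2, hz3⟩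
  · have : σ' y ∈ orbSet {θ, φ'} y := by
      rw [← hmono]; exact mem_orbSet_self _ _
    rw [hset] at this
    rcases this with h | h
    · exact hσ'.2 y h
    · exact hneθσ h.symm
  · rw [hset] at hz1
    rcases hz1 with rfl | rfl
    · exact hz3 (by simp)
    · exact hz3 (by simp)

/-- Every face with exactly 4 flags is "all-mono". -/
lemma four_face_mono (hθ : FPF θ) (hσ' : FPF σ') (hφ' : FPF φ')
    (h4 : ∀ x : F, Nat.card (orbSet {θ, σ'} x) = 4)
    (hnice : IsNice θ σ' φ' L) {y : F} (hf : (orbSet {θ, φ'} y).ncard = 4) :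
    ∀ x ∈ orbSet {θ, φ'} y, orbSet {θ, φ'} (σ' x) = orbSet {θ, φ'} y := by
  intro x hx
  have hθi := invol_apply hθ.1
  have hφi := invol_apply hφ'.1
  have hfx : orbSet {θ, φ'} x = orbSet {θ, φ'} y := orbSet_eq_of_mem hx
  by_contra hne
  rw [← hfx] at hne
  have h4x : (orbSet {θ, φ'} x).ncard = 4 := by rw [hfx]; exact hf
  have hne1 : φ' x ≠ θ x := by
    intro heq
    have hsub : orbSet {θ, φ'} x ⊆ {x, θ x} := by
      apply orbSet_subset_of_closed (Set.mem_insert _ _)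
      intro π hπ z hz
      have hπ' : π = θ ∨ π = φ' := by simpa using hπ
      have hz' : z = x ∨ z = θ x := by simpa using hz
      rcases hπ' with h | h <;> rcases hz' with h2 | h2 <;> rw [h, h2]
      · simp
      · simp [hθi x]
      · simp [heq]
      · have h3 : φ' (θ x) = x := by rw [← heq]; exact hφi x
        simp [h3]
    have hle : (orbSet {θ, φ'} x).ncard ≤ 2 :=
      le_trans (Set.ncard_le_ncard hsub (Set.toFinite _)) (ncard_le_two _ _)
    omega
  have hx1 : x ≠ θ x := fun h => hθ.2 x h.symm
  have hx2 : x ≠ φ' x := fun h => hφ'.2 x h.symm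
  have hx3 : x ≠ φ' (θ x) := by
    intro h
    have h' := congrArg φ' h
    rw [hφi] at h'
    exact hne1 h'
  have hx4 : θ x ≠ φ' x := Ne.symm hne1
  have hx5 : θ x ≠ φ' (θ x) := fun h => hφ'.2 (θ x) h.symm
  have hx6 : φ' x ≠ φ' (θ x) := fun h => hx1 (φ'.injective h)
  have hsubN : ({x, θ x, φ' x, φ' (θ x)} : Set F) ⊆ orbSet {θ, φ'} x := by
    rintro z (rfl | rfl | rfl | rfl)
    · exact mem_orbSet_self _ _
    · exact apply_mem_orbSet (by simp) (mem_orbSet_self _ _)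
    · exact apply_mem_orbSet (by simp) (mem_orbSet_self _ _)
    · exact apply_mem_orbSet (by simp) (apply_mem_orbSet (by simp) (mem_orbSet_self _ _))
  have hNf : ({x, θ x, φ' x, φ' (θ x)} : Set F) = orbSet {θ, φ'} x :=
    Set.eq_of_subset_of_ncard_le hsubN
      (by rw [h4x, ncard4 hx1 hx2 hx3 hx4 hx5 hx6]) (Set.toFinite _)
  rcases witness_or_mono hθ hσ' h4 hnice x with hmono | ⟨z, hz1, hz2, hz3⟩
  · exact hne hmono
  · rw [← hNf] at hz1
    exact hz3 hz1

/-- A set closed under a fixed-point-free involution has even cardinality. -/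
lemma even_ncard_of_invol_aux {π : Equiv.Perm F} (hfpf : ∀ x, π x ≠ x)
    (hinv : ∀ x, π (π x) = x) :
    ∀ n : ℕ, ∀ s : Set F, s.Finite → (∀ x ∈ s, π x ∈ s) → s.ncard = n → Even n := by
  intro n
  induction n using Nat.strong_induction_on with
  | _ n ih =>
    intro s hsfin hs hn
    rcases Set.eq_empty_or_nonempty s with rfl | ⟨x, hx⟩
    · simp only [Set.ncard_empty] at hn
      exact hn ▸ Even.zero
    · have hπx : π x ∈ s := hs x hx
      have hxx : x ≠ π x := fun h => hfpf x h.symm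
      have hsubp : ({x, π x} : Set F) ⊆ s := by
        rintro z (rfl | rfl) <;> assumption
      have hcard2 : ({x, π x} : Set F).ncard = 2 := Set.ncard_pair hxx
      have hd : (s \ {x, π x}).ncard + 2 = n := by
        have := Set.ncard_diff_add_ncard_of_subset hsubp hsfin
        rw [hcard2] at this
        omega
      have hclosed : ∀ z ∈ s \ {x, π x}, π z ∈ s \ {x, π x} := by
        rintro z ⟨hz1, hz2⟩
        simp only [Set.mem_insert_iff, Set.mem_singleton_iff] at hz2
        push_neg at hz2
        refine ⟨hs z hz1, ?_⟩
        simp only [Set.mem_insert_iff, Set.mem_singleton_iff]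
        push_neg
        constructor
        · intro h
          exact hz2.2 (by rw [← h, hinv])
        · intro h
          exact hz2.1 (π.injective h)
      have hsmall : (s \ {x, π x}).ncard < n := by omega
      have heven := ih _ hsmall (s \ {x, π x}) hsfin.diff hclosed rfl
      obtain ⟨k, hk⟩ := heven
      exact ⟨k + 1, by omega⟩

lemma even_ncard_of_invol {π : Equiv.Perm F} (hfpf : ∀ x, π x ≠ x)
    (hinv : ∀ x, π (π x) = x) [Finite F] (s : Set F) (hs : ∀ x ∈ s, π x ∈ s) :
    Even s.ncard :=
  even_ncard_of_invol_aux hfpf hinv _ s (Set.toFinite _) hs rfl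

/-- Good faces (having a two-faced side) have at least 6 flags. -/
lemma good_face_six (hθ : FPF θ) (hσ' : FPF σ') (hφ' : FPF φ')
    (h4 : ∀ x : F, Nat.card (orbSet {θ, σ'} x) = 4)
    (hnice : IsNice θ σ' φ' L) {y : F}
    (hgood : ∃ x ∈ orbSet {θ, φ'} y, orbSet {θ, φ'} (σ' x) ≠ orbSet {θ, φ'} y) :
    6 ≤ (orbSet {θ, φ'} y).ncard := by
  obtain ⟨x, hx, hnex⟩ := hgood
  have hn0 : (orbSet {θ, φ'} y).ncard ≠ 0 := by
    intro h0
    rw [Set.ncard_eq_zero (Set.toFinite _)] at h0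
    rw [h0] at hx
    exact hx
  have heven : Even (orbSet {θ, φ'} y).ncard :=
    even_ncard_of_invol hθ.2 (invol_apply hθ.1) _
      (fun z hz => apply_mem_orbSet (by simp) hz)
  have h2 : (orbSet {θ, φ'} y).ncard ≠ 2 := no_two_face hθ hσ' hφ' h4 hnice y
  have h4' : (orbSet {θ, φ'} y).ncard ≠ 4 := fun hh =>
    hnex (four_face_mono hθ hσ' hφ' h4 hnice hh x hx)
  obtain ⟨k, hk⟩ := heven
  omega

/-- Good faces contain at least two labelled flags. -/
lemma good_face_lab_two (hθ : FPF θ) (hσ' : FPF σ') (hφ' : FPF φ')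
    (h4 : ∀ x : F, Nat.card (orbSet {θ, σ'} x) = 4)
    (hL : IsLabelling σ' φ' L) (hnice : IsNice θ σ' φ' L) {y : F}
    (hgood : ∃ x ∈ orbSet {θ, φ'} y, orbSet {θ, φ'} (σ' x) ≠ orbSet {θ, φ'} y) :
    2 ≤ ({x | L x ≠ none} ∩ orbSet {θ, φ'} y).ncard := by
  obtain ⟨x, hx, hnex⟩ := hgood
  rcases witness_or_mono hθ hσ' h4 hnice x with hmono | ⟨z, hz1, hz2, hz3⟩
  · rw [orbSet_eq_of_mem hx] at hmono
    exact absurd hmono hnex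
  · have hz_face : z ∈ orbSet {θ, φ'} y := by
      rw [← orbSet_eq_of_mem hx]; exact hz1
    have hφz_face : φ' z ∈ orbSet {θ, φ'} y := apply_mem_orbSet (by simp) hz_face
    have hφz_lab : L (φ' z) ≠ none := by
      rw [hL.1 z (φ' z) (apply_mem_orbSet (by simp) (mem_orbSet_self _ _))]
      exact hz2
    have hzz : z ≠ φ' z := fun h => hφ'.2 z h.symm
    calc (2 : ℕ) = ({z, φ' z} : Set F).ncard := (Set.ncard_pair hzz).symm
    _ ≤ _ := Set.ncard_le_ncard
        (by rintro w (rfl | rfl)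
            · exact ⟨hz2, hz_face⟩
            · exact ⟨hφz_lab, hφz_face⟩) (Set.toFinite _)

/-- A good face with exactly two labelled flags contains a labelled degree-1
vertex ("tip") all of whose flags lie in the face. -/
lemma tip_of_lab_two (hθ : FPF θ) (hσ' : FPF σ') (hφ' : FPF φ')
    (h4 : ∀ x : F, Nat.card (orbSet {θ, σ'} x) = 4)
    (hL : IsLabelling σ' φ' L) (hnice : IsNice θ σ' φ' L) {y : F}
    (hb : ({x | L x ≠ none} ∩ orbSet {θ, φ'} y).ncard = 2) :
    ∃ z, L z ≠ none ∧ orbSet {σ', φ'} z ⊆ orbSet {θ, φ'} y := by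
  have hσi := invol_apply hσ'.1
  have hφi := invol_apply hφ'.1
  have hne0 : ({x | L x ≠ none} ∩ orbSet {θ, φ'} y).Nonempty :=
    Set.nonempty_of_ncard_ne_zero (by omega)
  obtain ⟨z, hzL, hzf⟩ := hne0
  have hφzf : φ' z ∈ orbSet {θ, φ'} y := apply_mem_orbSet (by simp) hzf
  have hφzL : L (φ' z) ≠ none := by
    rw [hL.1 z (φ' z) (apply_mem_orbSet (by simp) (mem_orbSet_self _ _))]
    exact hzL
  have hzz : z ≠ φ' z := fun h => hφ'.2 z h.symm
  have hpair : ({z, φ' z} : Set F) = {x | L x ≠ none} ∩ orbSet {θ, φ'} y :=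
    Set.eq_of_subset_of_ncard_le
      (by rintro w (rfl | rfl)
          · exact ⟨hzL, hzf⟩
          · exact ⟨hφzL, hφzf⟩)
      (by rw [hb, Set.ncard_pair hzz]) (Set.toFinite _)
  have hfz : orbSet {θ, φ'} z = orbSet {θ, φ'} y := orbSet_eq_of_mem hzf
  rcases witness_or_mono hθ hσ' h4 hnice z with hmono | ⟨w, hw1, hw2, hw3⟩
  · -- mono at z : σ' z lands in the face, so σ' z = φ' z, giving a tip
    have hσzf : σ' z ∈ orbSet {θ, φ'} y := by
      rw [← hfz, ← hmono]; exact mem_orbSet_self _ _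
    have hσzL : L (σ' z) ≠ none := by
      rw [hL.1 z (σ' z) (apply_mem_orbSet (by simp) (mem_orbSet_self _ _))]
      exact hzL
    have hmem : σ' z ∈ ({z, φ' z} : Set F) := by
      rw [hpair]; exact ⟨hσzL, hσzf⟩
    rcases hmem with h | h
    · exact absurd h (hσ'.2 z)
    · -- σ' z = φ' z : vertex of z = {z, φ' z} ⊆ face
      refine ⟨z, hzL, ?_⟩
      have hsub : orbSet {σ', φ'} z ⊆ {z, φ' z} := by
        apply orbSet_subset_of_closed (Set.mem_insert _ _)
        intro π hπ w hw
        have hπ' : π = σ' ∨ π = φ' := by simpa using hπ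
        have hw' : w = z ∨ w = φ' z := by simpa using hw
        rcases hπ' with h1 | h1 <;> rcases hw' with h2 | h2 <;> rw [h1, h2]
        · simp [h]
        · have h3 : σ' (φ' z) = z := by rw [← h]; exact hσi z
          simp [h3]
        · simp
        · simp [hφi z]
      intro w hw
      rcases hsub hw with rfl | h2
      · exact hzf
      · rw [h2]; exact hφzf
  · -- witness case is impossible: the witness would be a third labelled flag
    exfalso
    have hwf : w ∈ ({z, φ' z} : Set F) := by
      rw [hpair]
      refine ⟨hw2, ?_⟩
      rw [← hfz]; exact hw1
    rcases hwf with rfl | h2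
    · exact hw3 (by simp)
    · rw [Set.mem_singleton_iff] at h2
      exact hw3 (by simp [h2])

/-- A good face with 6 flags and exactly 4 labelled flags contains a tip. -/
lemma tip_of_six_four (hθ : FPF θ) (hσ' : FPF σ') (hφ' : FPF φ')
    (h4 : ∀ x : F, Nat.card (orbSet {θ, σ'} x) = 4)
    (hL : IsLabelling σ' φ' L) (hnice : IsNice θ σ' φ' L) {y : F}
    (ha : (orbSet {θ, φ'} y).ncard = 6)
    (hb : ({x | L x ≠ none} ∩ orbSet {θ, φ'} y).ncard = 4) :
    ∃ z, L z ≠ none ∧ orbSet {σ', φ'} z ⊆ orbSet {θ, φ'} y := by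
  have hθi := invol_apply hθ.1
  have hσi := invol_apply hσ'.1
  have hφi := invol_apply hφ'.1
  -- find an unlabelled flag u in the face
  have hW : ((orbSet {θ, φ'} y) \ ({x | L x ≠ none} ∩ orbSet {θ, φ'} y)).ncard = 2 := by
    rw [Set.ncard_diff Set.inter_subset_right (Set.toFinite _), ha, hb]
  have hWne : ((orbSet {θ, φ'} y) \ ({x | L x ≠ none} ∩ orbSet {θ, φ'} y)).Nonempty :=
    Set.nonempty_of_ncard_ne_zero (by omega)
  obtain ⟨u, huf, huW⟩ := hWne
  have huL : L u = none := by
    by_contra hc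
    exact huW ⟨hc, huf⟩
  have hmemθ : ∀ z ∈ orbSet {θ, φ'} y, θ z ∈ orbSet {θ, φ'} y :=
    fun z hz => apply_mem_orbSet (by simp) hz
  have hmemφ : ∀ z ∈ orbSet {θ, φ'} y, φ' z ∈ orbSet {θ, φ'} y :=
    fun z hz => apply_mem_orbSet (by simp) hz
  have hfu : orbSet {θ, φ'} u = orbSet {θ, φ'} y := orbSet_eq_of_mem huf
  have hu'f : φ' u ∈ orbSet {θ, φ'} y := hmemφ u huf
  have hvf : θ u ∈ orbSet {θ, φ'} y := hmemθ u huf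
  have hv'f : θ (φ' u) ∈ orbSet {θ, φ'} y := hmemθ _ hu'f
  have hpf : φ' (θ u) ∈ orbSet {θ, φ'} y := hmemφ _ hvf
  have hqf : φ' (θ (φ' u)) ∈ orbSet {θ, φ'} y := hmemφ _ hv'f
  have hu'L : L (φ' u) = none := by
    rw [hL.1 u (φ' u) (apply_mem_orbSet (by simp) (mem_orbSet_self _ _))]
    exact huL
  -- (i) θ u ≠ φ' u
  have hne1 : θ u ≠ φ' u := by
    intro heq
    have hsub : orbSet {θ, φ'} y ⊆ {u, θ u} := by
      rw [← hfu]
      apply orbSet_subset_of_closed (Set.mem_insert _ _)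
      intro π hπ z hz
      have hπ' : π = θ ∨ π = φ' := by simpa using hπ
      have hz' : z = u ∨ z = θ u := by simpa using hz
      rcases hπ' with h | h <;> rcases hz' with h2 | h2 <;> rw [h, h2]
      · simp
      · simp [hθi u]
      · simp [← heq]
      · have h3 : φ' (θ u) = u := by rw [heq]; exact hφi u
        simp [h3]
    have hle : (orbSet {θ, φ'} y).ncard ≤ 2 :=
      le_trans (Set.ncard_le_ncard hsub (Set.toFinite _)) (ncard_le_two _ _)
    omega
  -- (ii) φ' (θ u) ≠ θ (φ' u)
  have hne2 : φ' (θ u) ≠ θ (φ' u) := by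
    intro heq
    have hsub : orbSet {θ, φ'} y ⊆ {u, φ' u, θ u, θ (φ' u)} := by
      rw [← hfu]
      apply orbSet_subset_of_closed (Set.mem_insert _ _)
      intro π hπ z hz
      have hπ' : π = θ ∨ π = φ' := by simpa using hπ
      have hz' : z = u ∨ z = φ' u ∨ z = θ u ∨ z = θ (φ' u) := by simpa using hz
      rcases hπ' with h | h <;>
        rcases hz' with h2 | h2 | h2 | h2 <;> rw [h, h2]
      · simp
      · simp
      · simp [hθi u]
      · simp [hθi (φ' u)]
      · simp
      · simp [hφi u]
      · simp [heq]
      · have h3 : φ' (θ (φ' u)) = θ u := by rw [← heq]; exact hφi (θ u)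
        simp [h3]
    have hle : (orbSet {θ, φ'} y).ncard ≤ 4 :=
      le_trans (Set.ncard_le_ncard hsub (Set.toFinite _)) (ncard_le_four _ _ _ _)
    omega
  -- distinctness of the six flags
  have d12 : u ≠ φ' u := fun h => hφ'.2 u h.symm
  have d13 : u ≠ θ u := fun h => hθ.2 u h.symm
  have d14 : u ≠ θ (φ' u) := by
    intro h
    have h' := congrArg θ h
    rw [hθi] at h'
    exact hne1 h'
  have d15 : u ≠ φ' (θ u) := by
    intro h
    have h' := congrArg φ' h
    rw [hφi] at h'
    exact hne1 h'.symm
  have d16 : u ≠ φ' (θ (φ' u)) := by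
    intro h
    have h' := congrArg φ' h
    rw [hφi] at h'
    exact (fun hh => hθ.2 (φ' u) hh.symm : φ' u ≠ θ (φ' u)) h'
  have d23 : φ' u ≠ θ u := Ne.symm hne1
  have d24 : φ' u ≠ θ (φ' u) := fun h => hθ.2 (φ' u) h.symm
  have d25 : φ' u ≠ φ' (θ u) := fun h => d13 (φ'.injective h)
  have d26 : φ' u ≠ φ' (θ (φ' u)) := fun h => d14 (φ'.injective h)
  have d34 : θ u ≠ θ (φ' u) := fun h => d12 (θ.injective h)
  have d35 : θ u ≠ φ' (θ u) := fun h => hφ'.2 (θ u) h.symm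
  have d36 : θ u ≠ φ' (θ (φ' u)) := by
    intro h
    have h' := congrArg φ' h
    rw [hφi] at h'
    exact hne2 h'
  have d45 : θ (φ' u) ≠ φ' (θ u) := Ne.symm hne2
  have d46 : θ (φ' u) ≠ φ' (θ (φ' u)) := fun h => hφ'.2 (θ (φ' u)) h.symm
  have d56 : φ' (θ u) ≠ φ' (θ (φ' u)) := fun h => d34 (φ'.injective h)
  have hS6card :
      ({u, φ' u, θ u, θ (φ' u), φ' (θ u), φ' (θ (φ' u))} : Set F).ncard = 6 := by
    rw [Set.ncard_insert_of_notMem (by simp [d12, d13, d14, d15, d16]),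
        Set.ncard_insert_of_notMem (by simp [d23, d24, d25, d26]),
        Set.ncard_insert_of_notMem (by simp [d34, d35, d36]),
        Set.ncard_insert_of_notMem (by simp [d45, d46]),
        Set.ncard_pair d56]
  have hfS6 : orbSet {θ, φ'} y
      = {u, φ' u, θ u, θ (φ' u), φ' (θ u), φ' (θ (φ' u))} :=
    (Set.eq_of_subset_of_ncard_le
      (by rintro z (rfl | rfl | rfl | rfl | rfl | rfl)
          · exact huf
          · exact hu'f
          · exact hvf
          · exact hv'f
          · exact hpf
          · exact hqf)
      (by rw [ha, hS6card]) (Set.toFinite _)).symm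
  -- the only unlabelled flags of f are u and φ' u
  have hunlab_eq : ∀ z ∈ orbSet {θ, φ'} y, L z = none → z = u ∨ z = φ' u := by
    intro z hzf hzL
    have hzW : z ∈ (orbSet {θ, φ'} y) \ ({x | L x ≠ none} ∩ orbSet {θ, φ'} y) :=
      ⟨hzf, fun hc => hc.1 hzL⟩
    have hpairW : ({u, φ' u} : Set F)
        = (orbSet {θ, φ'} y) \ ({x | L x ≠ none} ∩ orbSet {θ, φ'} y) :=
      Set.eq_of_subset_of_ncard_le
        (by rintro w (rfl | rfl)
            · exact ⟨huf, fun hc => hc.1 huL⟩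
            · exact ⟨hu'f, fun hc => hc.1 hu'L⟩)
        (by rw [hW, Set.ncard_pair d12]) (Set.toFinite _)
    rw [← hpairW] at hzW
    simpa using hzW
  have hpL : L (φ' (θ u)) ≠ none := by
    intro hc
    rcases hunlab_eq _ hpf hc with h | h
    · exact d15 h.symm
    · exact d25 h.symm
  have hqL : L (φ' (θ (φ' u))) ≠ none := by
    intro hc
    rcases hunlab_eq _ hqf hc with h | h
    · exact d16 h.symm
    · exact d26 h.symm
  -- θ p = q
  have hθp : θ (φ' (θ u)) = φ' (θ (φ' u)) := by
    have hmem : θ (φ' (θ u)) ∈ orbSet {θ, φ'} y := hmemθ _ hpf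
    rw [hfS6] at hmem
    have hback : ∀ w : F, θ (φ' (θ u)) = w → φ' (θ u) = θ w := by
      intro w hw
      rw [← hθi (φ' (θ u)), hw]
    rcases hmem with h | h | h | h | h | h
    · exact absurd (hback _ h) (by
        intro hh
        exact d35 hh.symm)
    · exact absurd (hback _ h) (by
        intro hh
        exact hne2 hh)
    · exact absurd (hback _ h) (by
        rw [hθi]
        intro hh
        exact d15 hh.symm)
    · exact absurd (hback _ h) (by
        rw [hθi]
        intro hh
        exact d25 hh.symm)
    · exact absurd h (hθ.2 (φ' (θ u)))
    · exact h
  have hfp : orbSet {θ, φ'} (φ' (θ u)) = orbSet {θ, φ'} y := orbSet_eq_of_mem hpf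
  rcases witness_or_mono hθ hσ' h4 hnice (φ' (θ u)) with hmono | ⟨w, hw1, hw2, hw3⟩
  · -- mono at p
    have hσpf : σ' (φ' (θ u)) ∈ orbSet {θ, φ'} y := by
      rw [← hfp, ← hmono]; exact mem_orbSet_self _ _
    have hσpL : L (σ' (φ' (θ u))) ≠ none := by
      rw [hL.1 (φ' (θ u)) _ (apply_mem_orbSet (by simp) (mem_orbSet_self _ _))]
      exact hpL
    obtain ⟨-, hcommp, hnep⟩ := edge_struct hθ hσ' (h4 (φ' (θ u)))
    have hσp_cases : σ' (φ' (θ u)) = θ u ∨ σ' (φ' (θ u)) = θ (φ' u) := by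
      have hmem := hσpf
      rw [hfS6] at hmem
      rcases hmem with h | h | h | h | h | h
      · exfalso; rw [h] at hσpL; exact hσpL huL
      · exfalso; rw [h] at hσpL; exact hσpL hu'L
      · exact Or.inl h
      · exact Or.inr h
      · exact absurd h (hσ'.2 _)
      · rw [← hθp] at h
        exact absurd h.symm hnep
    rcases hσp_cases with hcase | hcase
    · -- tip at p
      refine ⟨φ' (θ u), hpL, ?_⟩
      have hsub : orbSet {σ', φ'} (φ' (θ u)) ⊆ {φ' (θ u), θ u} := by
        apply orbSet_subset_of_closed (Set.mem_insert _ _)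
        intro π hπ z hz
        have hπ' : π = σ' ∨ π = φ' := by simpa using hπ
        have hz' : z = φ' (θ u) ∨ z = θ u := by simpa using hz
        rcases hπ' with h1 | h1 <;> rcases hz' with h2 | h2 <;> rw [h1, h2]
        · simp [hcase]
        · have h3 : σ' (θ u) = φ' (θ u) := by
            have := hσi (φ' (θ u))
            rw [hcase] at this
            exact this
          simp [h3]
        · simp [hφi (θ u)]
        · simp
      intro w hw
      rcases hsub hw with h2 | h2
      · rw [h2]; exact hpf
      · rw [h2]; exact hvf
    · -- contradiction : σ' q would be the unlabelled flag φ' u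
      exfalso
      have h1 : σ' (φ' (θ (φ' u))) = φ' u := by
        rw [← hθp, hcommp, hcase, hθi]
      have h2 : L (σ' (φ' (θ (φ' u)))) ≠ none := by
        rw [hL.1 (φ' (θ (φ' u))) _ (apply_mem_orbSet (by simp) (mem_orbSet_self _ _))]
        exact hqL
      rw [h1] at h2
      exact h2 hu'L
  · -- witness at p impossible
    exfalso
    rw [hfp] at hw1
    have hNset : ({φ' (θ u), θ (φ' (θ u)), φ' (φ' (θ u)), φ' (θ (φ' (θ u)))} : Set F)
        = {φ' (θ u), φ' (θ (φ' u)), θ u, θ (φ' u)} := by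
      simp only [hθp, hφi]
    rw [hNset] at hw3
    rw [hfS6] at hw1
    simp only [Set.mem_insert_iff, Set.mem_singleton_iff] at hw1 hw3
    push_neg at hw3
    obtain ⟨hn1, hn2, hn3, hn4⟩ := hw3
    rcases hw1 with rfl | rfl | rfl | rfl | rfl | rfl
    · exact hw2 huL
    · exact hw2 hu'L
    · exact hn3 rfl
    · exact hn4 rfl
    · exact hn1 rfl
    · exact hn2 rfl


/-- Base per-face inequality for good faces. -/
lemma face_ineq_base (hθ : FPF θ) (hσ' : FPF σ') (hφ' : FPF φ')
    (h4 : ∀ x : F, Nat.card (orbSet {θ, σ'} x) = 4)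
    (hL : IsLabelling σ' φ' L) (hnice : IsNice θ σ' φ' L) {y : F}
    (hgood : ∃ x ∈ orbSet {θ, φ'} y, orbSet {θ, φ'} (σ' x) ≠ orbSet {θ, φ'} y) :
    14 ≤ (orbSet {θ, φ'} y).ncard
        + 4 * (({x | L x ≠ none} ∩ orbSet {θ, φ'} y).ncard) := by
  have ha6 : 6 ≤ (orbSet {θ, φ'} y).ncard := good_face_six hθ hσ' hφ' h4 hnice hgood
  have hb2 : 2 ≤ ({x | L x ≠ none} ∩ orbSet {θ, φ'} y).ncard :=
    good_face_lab_two hθ hσ' hφ' h4 hL hnice hgood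
  omega

/-- Per-face inequality for good faces without a tip. -/
lemma face_ineq_notip (hθ : FPF θ) (hσ' : FPF σ') (hφ' : FPF φ')
    (h4 : ∀ x : F, Nat.card (orbSet {θ, σ'} x) = 4)
    (hL : IsLabelling σ' φ' L) (hnice : IsNice θ σ' φ' L) {y : F}
    (hgood : ∃ x ∈ orbSet {θ, φ'} y, orbSet {θ, φ'} (σ' x) ≠ orbSet {θ, φ'} y)
    (hnotip : ¬ ∃ z, L z ≠ none ∧ orbSet {σ', φ'} z ⊆ orbSet {θ, φ'} y) :
    24 ≤ (orbSet {θ, φ'} y).ncard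
        + 4 * (({x | L x ≠ none} ∩ orbSet {θ, φ'} y).ncard) := by
  have ha6 : 6 ≤ (orbSet {θ, φ'} y).ncard := good_face_six hθ hσ' hφ' h4 hnice hgood
  have hb2 : 2 ≤ ({x | L x ≠ none} ∩ orbSet {θ, φ'} y).ncard :=
    good_face_lab_two hθ hσ' hφ' h4 hL hnice hgood
  have hevena : Even (orbSet {θ, φ'} y).ncard :=
    even_ncard_of_invol hθ.2 (invol_apply hθ.1) _
      (fun z hz => apply_mem_orbSet (by simp) hz)
  have hevenb : Even ({x | L x ≠ none} ∩ orbSet {θ, φ'} y).ncard := by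
    apply even_ncard_of_invol hφ'.2 (invol_apply hφ'.1)
    rintro z ⟨hz1, hz2⟩
    refine ⟨?_, apply_mem_orbSet (by simp) hz2⟩
    show L (φ' z) ≠ none
    rw [hL.1 z (φ' z) (apply_mem_orbSet (by simp) (mem_orbSet_self _ _))]
    exact hz1
  have hb2' : ({x | L x ≠ none} ∩ orbSet {θ, φ'} y).ncard ≠ 2 := fun hb =>
    hnotip (tip_of_lab_two hθ hσ' hφ' h4 hL hnice hb)
  by_cases hb6 : 6 ≤ ({x | L x ≠ none} ∩ orbSet {θ, φ'} y).ncard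
  · omega
  · push_neg at hb6
    have hb4 : ({x | L x ≠ none} ∩ orbSet {θ, φ'} y).ncard = 4 := by
      obtain ⟨k, hk⟩ := hevenb
      omega
    have ha6' : (orbSet {θ, φ'} y).ncard ≠ 6 := fun ha =>
      hnotip (tip_of_six_four hθ hσ' hφ' h4 hL hnice ha hb4)
    obtain ⟨m, hm⟩ := hevena
    omega

end FaceLemmas

section Counting

variable [Fintype F]

/-- The finset of all orbits of `⟨S⟩` acting on `F`. -/
noncomputable def Orbs (S : Set (Equiv.Perm F)) : Finset (Set F) :=
  @Finset.image _ _ (Classical.decEq _) (fun x => orbSet S x) Finset.univ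

lemma mem_Orbs_iff {S : Set (Equiv.Perm F)} {O : Set F} :
    O ∈ Orbs S ↔ ∃ x, orbSet S x = O := by
  classical
  constructor
  · intro h
    obtain ⟨x, -, hx⟩ := Finset.mem_image.mp h
    exact ⟨x, hx⟩
  · rintro ⟨x, rfl⟩
    exact Finset.mem_image.mpr ⟨x, Finset.mem_univ x, rfl⟩

lemma orbSet_eq_of_mem_Orbs {S : Set (Equiv.Perm F)} {O : Set F} (hO : O ∈ Orbs S)
    {x : F} (hx : x ∈ O) : orbSet S x = O := by
  obtain ⟨w, rfl⟩ := mem_Orbs_iff.mp hO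
  exact orbSet_eq_of_mem hx

lemma exists_mem_of_mem_Orbs {S : Set (Equiv.Perm F)} {O : Set F} (hO : O ∈ Orbs S) :
    ∃ x, x ∈ O ∧ orbSet S x = O := by
  obtain ⟨w, rfl⟩ := mem_Orbs_iff.mp hO
  exact ⟨w, mem_orbSet_self _ _, rfl⟩

lemma Orbs_disjoint {S : Set (Equiv.Perm F)} {O O' : Set F} (hO : O ∈ Orbs S)
    (hO' : O' ∈ Orbs S) (hne : O ≠ O') : Disjoint O O' := by
  rw [Set.disjoint_left]
  intro x hx hx'
  exact hne ((orbSet_eq_of_mem_Orbs hO hx).symm.trans (orbSet_eq_of_mem_Orbs hO' hx'))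

lemma orbCount_eq_card_Orbs (S : Set (Equiv.Perm F)) : orbCount S = (Orbs S).card := by
  classical
  have e : MulAction.orbitRel.Quotient (Subgroup.closure S) F ≃
      {O : Set F // O ∈ Orbs S} := by
    refine Equiv.ofBijective
      (fun ω => Quotient.liftOn' ω
        (fun x => (⟨orbSet S x, mem_Orbs_iff.mpr ⟨x, rfl⟩⟩ : {O : Set F // O ∈ Orbs S}))
        ?_) ⟨?_, ?_⟩
    · intro a b hab
      have hab' : a ∈ orbSet S b := MulAction.orbitRel_apply.mp hab
      exact Subtype.ext (orbSet_eq_of_mem hab')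
    · intro ω₁ ω₂ hω
      induction ω₁ using Quotient.inductionOn' with
      | h a =>
        induction ω₂ using Quotient.inductionOn' with
        | h b =>
          simp only [Quotient.liftOn'_mk'', Subtype.mk.injEq] at hω
          apply Quotient.sound'
          apply MulAction.orbitRel_apply.mpr
          show a ∈ orbSet S b
          rw [← hω]
          exact mem_orbSet_self S a
    · rintro ⟨O, hO⟩
      obtain ⟨x, hx, hxeq⟩ := exists_mem_of_mem_Orbs hO
      exact ⟨Quotient.mk'' x, Subtype.ext (by simpa using hxeq)⟩
  rw [orbCount, Nat.card_congr e, Nat.card_eq_fintype_card, Fintype.card_coe]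

lemma sum_ncard_inter (S : Set (Equiv.Perm F)) (T : Set F) :
    ∑ O ∈ Orbs S, (T ∩ O).ncard = T.ncard := by
  classical
  rw [Set.ncard_eq_toFinset_card' T]
  rw [Finset.card_eq_sum_card_fiberwise
    (f := fun x => orbSet S x) (t := Orbs S)
    (fun x _ => mem_Orbs_iff.mpr ⟨x, rfl⟩)]
  refine Finset.sum_congr rfl fun O hO => ?_
  rw [Set.ncard_eq_toFinset_card']
  congr 1
  ext x
  simp only [Set.mem_toFinset, Finset.mem_filter, Set.mem_inter_iff]
  constructor
  · rintro ⟨hxT, hxO⟩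
    exact ⟨hxT, orbSet_eq_of_mem_Orbs hO hxO⟩
  · rintro ⟨hxT, hxeq⟩
    exact ⟨hxT, hxeq ▸ mem_orbSet_self S x⟩

lemma sum_ncard_orbs (S : Set (Equiv.Perm F)) :
    ∑ O ∈ Orbs S, O.ncard = Fintype.card F := by
  have h := sum_ncard_inter S Set.univ
  simp only [Set.univ_inter] at h
  rw [h, Set.ncard_univ, Nat.card_eq_fintype_card]

/-- Bounding a family of disjoint sets, each containing a "key" element whose
key determines membership, by the number of possible keys. -/
lemma card_le_of_key {Y : Type*} [Fintype Y] (A : Finset (Set F)) (toY : F → Option Y)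
    (hz : ∀ O ∈ A, ∃ x, x ∈ O ∧ toY x ≠ none ∧ ∀ x', toY x' = toY x → x' ∈ O)
    (hdisj : ∀ O ∈ A, ∀ O' ∈ A, O ≠ O' → Disjoint O O') :
    A.card ≤ Fintype.card Y := by
  classical
  have h : ∀ O ∈ A, ∃ y : Y, ∃ x, x ∈ O ∧ toY x = some y ∧
      ∀ x', toY x' = toY x → x' ∈ O := by
    intro O hO
    obtain ⟨x, hxO, hxn, hcl⟩ := hz O hO
    obtain ⟨y, hy⟩ := Option.ne_none_iff_exists'.mp hxn
    exact ⟨y, x, hxO, hy, hcl⟩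
  set g : Set F → Option Y := fun O =>
    if h' : ∃ y : Y, ∃ x, x ∈ O ∧ toY x = some y ∧ ∀ x', toY x' = toY x → x' ∈ O
    then some h'.choose else none with hg
  have hmaps : ∀ O ∈ A, g O ∈ Finset.univ.image (some : Y → Option Y) := by
    intro O hO
    rw [hg]
    simp only [dif_pos (h O hO)]
    exact Finset.mem_image_of_mem _ (Finset.mem_univ _)
  have hinj : Set.InjOn g A := by
    intro O hO O' hO' hgeq
    by_contra hne
    have h1 := h O hO
    have h2 := h O' hO'
    rw [hg] at hgeq
    simp only [dif_pos h1, dif_pos h2, Option.some.injEq] at hgeq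
    obtain ⟨x, hxO, hx, hclO⟩ := h1.choose_spec
    obtain ⟨x', hxO', hx', _⟩ := h2.choose_spec
    have hkey : toY x' = toY x := by rw [hx, hx', hgeq]
    have hx'O : x' ∈ O := hclO x' hkey
    exact Set.disjoint_left.mp (hdisj O hO O' hO' hne) hx'O hxO'
  calc A.card ≤ (Finset.univ.image (some : Y → Option Y)).card :=
        Finset.card_le_card_of_injOn g hmaps hinj
  _ = Fintype.card Y := by
      rw [Finset.card_image_of_injective _ (Option.some_injective Y), Finset.card_univ]

end Counting

end Stmt12Aux

open Stmt12Aux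

theorem stmt12 {F : Type*} [Fintype F] {t : ℕ}
    (θ σ' φ' : Equiv.Perm F) (h : IsGraphEmb θ σ' φ')
    (L : F → Option (Fin t)) (hL : IsLabelling σ' φ' L)
    (hnice : IsNice θ σ' φ' L) :
    (Fintype.card F : ℤ) ≤ 48 * t + 24 * genus θ σ' φ' ∧
    (orbCount {θ, σ'} : ℤ) ≤ 12 * t + 6 * genus θ σ' φ' := by
  classical
  obtain ⟨hθ, hσ', hφ', h4⟩ := h
  -- edge count: every flag lies in an edge orbit of size 4
  have hEcard : Fintype.card F = 4 * orbCount {θ, σ'} := by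
    have hall : ∀ O ∈ Orbs (F := F) {θ, σ'}, O.ncard = 4 := by
      intro O hO
      obtain ⟨x, hx, hxeq⟩ := exists_mem_of_mem_Orbs hO
      rw [← hxeq, ← Nat.card_coe_set_eq]
      exact h4 x
    rw [← sum_ncard_orbs (F := F) {θ, σ'}, Finset.sum_congr rfl hall,
        Finset.sum_const, smul_eq_mul, orbCount_eq_card_Orbs, mul_comm]
  -- labelled/unlabelled flags partition
  have hUL : ({x | L x = none} : Set F).ncard + ({x | L x ≠ none} : Set F).ncard
      = Fintype.card F := by
    have h1 : ({x | L x = none} : Set F)ᶜ = {x | L x ≠ none} := by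
      ext x; simp
    rw [← h1, Set.ncard_add_ncard_compl, Nat.card_eq_fintype_card]
  -- ===== vertex bound =====
  have hV : 6 * orbCount {σ', φ'} ≤
      6 * t + 6 * orbCount {θ, σ', φ'} + ({x | L x = none} : Set F).ncard := by
    set OV := Orbs (F := F) {σ', φ'} with hOVdef
    set P1 : Set F → Prop := fun O => ∃ z ∈ O, L z ≠ none with hP1def
    set P2 : Set F → Prop := fun O => O.ncard < 6 with hP2def
    have hsplit1 : (OV.filter P1).card + (OV.filter (fun O => ¬ P1 O)).card = OV.card :=
      Finset.card_filter_add_card_filter_not (p := P1)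
    have hsplit2 : ((OV.filter (fun O => ¬ P1 O)).filter P2).card
        + ((OV.filter (fun O => ¬ P1 O)).filter (fun O => ¬ P2 O)).card
        = (OV.filter (fun O => ¬ P1 O)).card :=
      Finset.card_filter_add_card_filter_not (p := P2)
    -- labelled vertex orbits inject into labels
    have hlab : (OV.filter P1).card ≤ t := by
      have hle := card_le_of_key (Y := Fin t) (OV.filter P1) L ?_ ?_
      · simpa using hle
      · intro O hO
        rw [Finset.mem_filter] at hO
        obtain ⟨hO1, hO2⟩ := hO
        rw [hP1def] at hO2
        obtain ⟨z, hz1, hz2⟩ := hO2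
        refine ⟨z, hz1, hz2, ?_⟩
        intro x' hx'
        obtain ⟨ℓ, hℓ⟩ := Option.ne_none_iff_exists'.mp hz2
        have hmem : x' ∈ orbSet {σ', φ'} z := hL.2 z x' ℓ hℓ (by rw [hx', hℓ])
        rwa [orbSet_eq_of_mem_Orbs hO1 hz1] at hmem
      · intro O hO O' hO' hne
        exact Orbs_disjoint (Finset.mem_filter.mp hO).1 (Finset.mem_filter.mp hO').1 hne
    -- small unlabelled vertex orbits are components
    have hsm : ((OV.filter (fun O => ¬ P1 O)).filter P2).card ≤ orbCount {θ, σ', φ'} := by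
      rw [orbCount_eq_card_Orbs]
      have hle := card_le_of_key (Y := {B : Set F // B ∈ Orbs (F := F) {θ, σ', φ'}})
        ((OV.filter (fun O => ¬ P1 O)).filter P2)
        (fun w => some ⟨orbSet {θ, σ', φ'} w, mem_Orbs_iff.mpr ⟨w, rfl⟩⟩) ?_ ?_
      · calc ((OV.filter (fun O => ¬ P1 O)).filter P2).card
            ≤ Fintype.card {B : Set F // B ∈ Orbs (F := F) {θ, σ', φ'}} := hle
        _ = (Orbs (F := F) {θ, σ', φ'}).card := Fintype.card_coe _
      · intro O hO
        simp only [Finset.mem_filter] at hO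
        obtain ⟨⟨hO1, hO2⟩, hO3⟩ := hO
        rw [hP1def] at hO2
        rw [hP2def] at hO3
        obtain ⟨x, hxO, hxeq⟩ := exists_mem_of_mem_Orbs hO1
        have hLx : L x = none := by
          by_contra hc
          exact hO2 ⟨x, hxO, hc⟩
        have hsmall : Nat.card (orbSet {σ', φ'} x) < 6 := by
          rw [Nat.card_coe_set_eq, hxeq]; exact hO3
        have hiso := hnice.1 x hLx hsmall
        refine ⟨x, hxO, by simp, ?_⟩
        intro x' hx'
        simp only [Option.some.injEq, Subtype.mk.injEq] at hx'
        have hmem : x' ∈ orbSet {θ, σ', φ'} x := by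
          rw [← hx']; exact mem_orbSet_self _ _
        rw [← hiso, hxeq] at hmem
        exact hmem
      · intro O hO O' hO' hne
        exact Orbs_disjoint (Finset.mem_filter.mp (Finset.mem_filter.mp hO).1).1
          (Finset.mem_filter.mp (Finset.mem_filter.mp hO').1).1 hne
    -- big unlabelled vertex orbits have ≥ 6 unlabelled flags each
    have hbig : 6 * ((OV.filter (fun O => ¬ P1 O)).filter (fun O => ¬ P2 O)).card
        ≤ ({x | L x = none} : Set F).ncard := by
      have h1 : ∀ O ∈ (OV.filter (fun O => ¬ P1 O)).filter (fun O => ¬ P2 O),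
          6 ≤ (({x | L x = none} : Set F) ∩ O).ncard := by
        intro O hO
        simp only [Finset.mem_filter] at hO
        obtain ⟨⟨hO1, hO2⟩, hO3⟩ := hO
        rw [hP1def] at hO2
        rw [hP2def] at hO3
        have hOU : ({x | L x = none} : Set F) ∩ O = O := by
          ext z
          constructor
          · exact fun hz => hz.2
          · intro hz
            refine ⟨?_, hz⟩
            by_contra hc
            exact hO2 ⟨z, hz, hc⟩
        rw [hOU]
        omega
      calc 6 * ((OV.filter (fun O => ¬ P1 O)).filter (fun O => ¬ P2 O)).card
          = ∑ _O ∈ (OV.filter (fun O => ¬ P1 O)).filter (fun O => ¬ P2 O), 6 := by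
            rw [Finset.sum_const, smul_eq_mul, mul_comm]
      _ ≤ ∑ O ∈ (OV.filter (fun O => ¬ P1 O)).filter (fun O => ¬ P2 O),
            (({x | L x = none} : Set F) ∩ O).ncard := Finset.sum_le_sum h1
      _ ≤ ∑ O ∈ OV, (({x | L x = none} : Set F) ∩ O).ncard := by
            apply Finset.sum_le_sum_of_subset
            exact (Finset.filter_subset _ _).trans (Finset.filter_subset _ _)
      _ = ({x | L x = none} : Set F).ncard := by
            rw [hOVdef]; exact sum_ncard_inter _ _
    rw [orbCount_eq_card_Orbs (F := F) {σ', φ'}, ← hOVdef]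
    omega
  -- ===== face bound =====
  have hFc : 24 * orbCount {θ, φ'} ≤ 24 * orbCount {θ, σ', φ'} + Fintype.card F
      + 4 * ({x | L x ≠ none} : Set F).ncard + 10 * t := by
    set OF := Orbs (F := F) {θ, φ'} with hOFdef
    set PG : Set F → Prop := fun O => ∃ x ∈ O, orbSet {θ, φ'} (σ' x) ≠ O with hPGdef
    set PT : Set F → Prop := fun O => ∃ z, L z ≠ none ∧ orbSet {σ', φ'} z ⊆ O with hPTdef
    have hsplit : (OF.filter PG).card + (OF.filter (fun O => ¬ PG O)).card = OF.card :=
      Finset.card_filter_add_card_filter_not (p := PG)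
    -- all-mono faces are components
    have hmono : (OF.filter (fun O => ¬ PG O)).card ≤ orbCount {θ, σ', φ'} := by
      rw [orbCount_eq_card_Orbs]
      have hle := card_le_of_key (Y := {B : Set F // B ∈ Orbs (F := F) {θ, σ', φ'}})
        (OF.filter (fun O => ¬ PG O))
        (fun w => some ⟨orbSet {θ, σ', φ'} w, mem_Orbs_iff.mpr ⟨w, rfl⟩⟩) ?_ ?_
      · calc (OF.filter (fun O => ¬ PG O)).card
            ≤ Fintype.card {B : Set F // B ∈ Orbs (F := F) {θ, σ', φ'}} := hle
        _ = (Orbs (F := F) {θ, σ', φ'}).card := Fintype.card_coe _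
      · intro O hO
        rw [Finset.mem_filter] at hO
        obtain ⟨hO1, hO2⟩ := hO
        simp only [hPGdef] at hO2
        push_neg at hO2
        obtain ⟨x, hxO, hxeq⟩ := exists_mem_of_mem_Orbs hO1
        have hsub1 : orbSet {θ, σ', φ'} x ⊆ O := by
          apply orbSet_subset_of_closed hxO
          intro π hπ z hz
          have hπ' : π = θ ∨ π = σ' ∨ π = φ' := by simpa using hπ
          have hfz : orbSet {θ, φ'} z = O := orbSet_eq_of_mem_Orbs hO1 hz
          rcases hπ' with h | h | h <;> rw [h]
          · rw [← hfz]; exact apply_mem_orbSet (by simp) (mem_orbSet_self _ _)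
          · have hh := hO2 z hz
            rw [← hh]; exact mem_orbSet_self _ _
          · rw [← hfz]; exact apply_mem_orbSet (by simp) (mem_orbSet_self _ _)
        have hsub2 : O ⊆ orbSet {θ, σ', φ'} x := by
          rw [← hxeq]
          apply orbSet_mono
          intro π hπ
          simp only [Set.mem_insert_iff, Set.mem_singleton_iff] at hπ ⊢
          tauto
        have hOC : O = orbSet {θ, σ', φ'} x := Set.Subset.antisymm hsub2 hsub1
        refine ⟨x, hxO, by simp, ?_⟩
        intro x' hx'
        simp only [Option.some.injEq, Subtype.mk.injEq] at hx'
        have hmem : x' ∈ orbSet {θ, σ', φ'} x := by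
          rw [← hx']; exact mem_orbSet_self _ _
        rw [← hOC] at hmem
        exact hmem
      · intro O hO O' hO' hne
        exact Orbs_disjoint (Finset.mem_filter.mp hO).1 (Finset.mem_filter.mp hO').1 hne
    -- good faces
    have hsplit2 : ((OF.filter PG).filter PT).card
        + ((OF.filter PG).filter (fun O => ¬ PT O)).card = (OF.filter PG).card :=
      Finset.card_filter_add_card_filter_not (p := PT)
    -- tipped faces inject into labels
    have htip : ((OF.filter PG).filter PT).card ≤ t := by
      have hle := card_le_of_key (Y := Fin t) ((OF.filter PG).filter PT) L ?_ ?_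
      · simpa using hle
      · intro O hO
        simp only [Finset.mem_filter] at hO
        obtain ⟨⟨hO1, -⟩, hO3⟩ := hO
        rw [hPTdef] at hO3
        obtain ⟨z, hz1, hz2⟩ := hO3
        refine ⟨z, hz2 (mem_orbSet_self _ _), hz1, ?_⟩
        intro x' hx'
        obtain ⟨ℓ, hℓ⟩ := Option.ne_none_iff_exists'.mp hz1
        have hmem : x' ∈ orbSet {σ', φ'} z := hL.2 z x' ℓ hℓ (by rw [hx', hℓ])
        exact hz2 hmem
      · intro O hO O' hO' hne
        exact Orbs_disjoint (Finset.mem_filter.mp (Finset.mem_filter.mp hO).1).1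
          (Finset.mem_filter.mp (Finset.mem_filter.mp hO').1).1 hne
    -- per-face bounds
    have hb1 : ∀ O ∈ (OF.filter PG).filter PT,
        24 ≤ (O.ncard + 4 * (({x | L x ≠ none} : Set F) ∩ O).ncard) + 10 := by
      intro O hO
      simp only [Finset.mem_filter] at hO
      obtain ⟨⟨hO1, hP⟩, -⟩ := hO
      rw [hPGdef] at hP
      obtain ⟨x0, hx0O, hx0⟩ := hP
      have hOeq : orbSet {θ, φ'} x0 = O := orbSet_eq_of_mem_Orbs hO1 hx0O
      have hgood0 : ∃ x ∈ orbSet {θ, φ'} x0,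
          orbSet {θ, φ'} (σ' x) ≠ orbSet {θ, φ'} x0 := by
        refine ⟨x0, mem_orbSet_self _ _, ?_⟩
        rw [hOeq]; exact hx0
      have hbase := face_ineq_base hθ hσ' hφ' h4 hL hnice hgood0
      rw [hOeq] at hbase
      omega
    have hb2 : ∀ O ∈ (OF.filter PG).filter (fun O => ¬ PT O),
        24 ≤ O.ncard + 4 * (({x | L x ≠ none} : Set F) ∩ O).ncard := by
      intro O hO
      simp only [Finset.mem_filter] at hO
      obtain ⟨⟨hO1, hP⟩, hnT⟩ := hO
      rw [hPGdef] at hP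
      rw [hPTdef] at hnT
      obtain ⟨x0, hx0O, hx0⟩ := hP
      have hOeq : orbSet {θ, φ'} x0 = O := orbSet_eq_of_mem_Orbs hO1 hx0O
      have hgood0 : ∃ x ∈ orbSet {θ, φ'} x0,
          orbSet {θ, φ'} (σ' x) ≠ orbSet {θ, φ'} x0 := by
        refine ⟨x0, mem_orbSet_self _ _, ?_⟩
        rw [hOeq]; exact hx0
      have hnotip0 : ¬ ∃ z, L z ≠ none ∧ orbSet {σ', φ'} z ⊆ orbSet {θ, φ'} x0 := by
        rw [hOeq]; exact hnT
      have hnt := face_ineq_notip hθ hσ' hφ' h4 hL hnice hgood0 hnotip0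
      rw [hOeq] at hnt
      omega
    -- summation
    have hs1 : 24 * ((OF.filter PG).filter PT).card
        ≤ (∑ O ∈ (OF.filter PG).filter PT,
            (O.ncard + 4 * (({x | L x ≠ none} : Set F) ∩ O).ncard))
          + 10 * ((OF.filter PG).filter PT).card := by
      have hss := Finset.sum_le_sum hb1
      rw [Finset.sum_const, smul_eq_mul, Finset.sum_add_distrib, Finset.sum_const,
        smul_eq_mul] at hss
      omega
    have hs2 : 24 * ((OF.filter PG).filter (fun O => ¬ PT O)).card
        ≤ ∑ O ∈ (OF.filter PG).filter (fun O => ¬ PT O),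
            (O.ncard + 4 * (({x | L x ≠ none} : Set F) ∩ O).ncard) := by
      have hss := Finset.sum_le_sum hb2
      rw [Finset.sum_const, smul_eq_mul] at hss
      omega
    have hsum_split : (∑ O ∈ (OF.filter PG).filter PT,
          (O.ncard + 4 * (({x | L x ≠ none} : Set F) ∩ O).ncard))
        + ∑ O ∈ (OF.filter PG).filter (fun O => ¬ PT O),
            (O.ncard + 4 * (({x | L x ≠ none} : Set F) ∩ O).ncard)
        = ∑ O ∈ OF.filter PG,
            (O.ncard + 4 * (({x | L x ≠ none} : Set F) ∩ O).ncard) :=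
      Finset.sum_filter_add_sum_filter_not _ _ _
    have hsum_all : ∑ O ∈ OF.filter PG,
          (O.ncard + 4 * (({x | L x ≠ none} : Set F) ∩ O).ncard)
        ≤ Fintype.card F + 4 * ({x | L x ≠ none} : Set F).ncard := by
      calc ∑ O ∈ OF.filter PG,
            (O.ncard + 4 * (({x | L x ≠ none} : Set F) ∩ O).ncard)
          ≤ ∑ O ∈ OF, (O.ncard + 4 * (({x | L x ≠ none} : Set F) ∩ O).ncard) :=
            Finset.sum_le_sum_of_subset (Finset.filter_subset _ _)
      _ = (∑ O ∈ OF, O.ncard)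
            + ∑ O ∈ OF, 4 * (({x | L x ≠ none} : Set F) ∩ O).ncard :=
            Finset.sum_add_distrib
      _ = Fintype.card F + 4 * ({x | L x ≠ none} : Set F).ncard := by
            rw [← Finset.mul_sum, hOFdef, sum_ncard_orbs, sum_ncard_inter]
    rw [orbCount_eq_card_Orbs (F := F) {θ, φ'}, ← hOFdef]
    omega
  -- ===== final arithmetic =====
  have hmain : Fintype.card F + 24 * orbCount {σ', φ'} + 24 * orbCount {θ, φ'}
      ≤ 48 * t + 24 * orbCount {θ, σ'} + 48 * orbCount {θ, σ', φ'} := by omega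
  have hmainz : (Fintype.card F : ℤ) + 24 * (orbCount {σ', φ'} : ℤ)
      + 24 * (orbCount {θ, φ'} : ℤ)
      ≤ 48 * (t : ℤ) + 24 * (orbCount {θ, σ'} : ℤ)
      + 48 * (orbCount {θ, σ', φ'} : ℤ) := by exact_mod_cast hmain
  have hEz : (Fintype.card F : ℤ) = 4 * (orbCount {θ, σ'} : ℤ) := by exact_mod_cast hEcard
  constructor
  · unfold genus
    linarith
  · unfold genus
    linarith
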